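/- Let Y be a non-zero separable Banach space and φ ∈ Y* a non-zero continuous linear functional. Then there exists a G_δ subset 𝔾 of Y of Hausdorff dimension 1 such that 𝔾 contains a d-dense subset of the wedge space (i.e. for every wedge W in Y and every ε > 0 there is a wedge W' ⊆ 𝔾 with wedge distance d(W',W) < ε) and such that the intersection 𝔾 ∩ (y + ker φ) is totally disconnected for every y ∈ Y. -/

import Mathlib

open Metric Set

/-- The wedge `W(t) = [t₁,t₂] ∪ [t₂,t₃]` determined by a triple of points. -/
def wedge {Y : Type*} [NormedAddCommGroup Y] [NormedSpace ℝ Y] (t : Y × Y × Y) : Set Y :=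
  segment ℝ t.1 t.2.1 ∪ segment ℝ t.2.1 t.2.2

/-- The standard wedge distance `max_{1≤i≤3} ‖t'ᵢ − tᵢ‖`. -/
def wedgeDist {Y : Type*} [NormedAddCommGroup Y] (t s : Y × Y × Y) : ℝ :=
  max ‖t.1 - s.1‖ (max ‖t.2.1 - s.2.1‖ ‖t.2.2 - s.2.2‖)

open MeasureTheory Filter ENNReal Topology

namespace Statement11Aux

variable {Y : Type*} [NormedAddCommGroup Y] [NormedSpace ℝ Y]

/-- The endpoint pairs of the two segments of a wedge. -/
def pr (t : Y × Y × Y) (b : Bool) : Y × Y := bif b then (t.2.1, t.2.2) else (t.1, t.2.1)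

lemma wedge_eq (t : Y × Y × Y) :
    wedge t = segment ℝ (pr t false).1 (pr t false).2 ∪ segment ℝ (pr t true).1 (pr t true).2 := by
  simp [wedge, pr]

/-- Equally spaced points on a segment. -/
noncomputable def segPt (a b : Y) (m j : ℕ) : Y := a + ((j : ℝ) / (m : ℝ)) • (b - a)

/-- The `j`-th ball (of `m+1`) covering a segment. -/
noncomputable def segBall (p : Y × Y) (ε : ℝ) (m j : ℕ) : Set Y :=
  if j ≤ m then Metric.ball (segPt p.1 p.2 m j) ε else ∅

lemma isOpen_segBall (p : Y × Y) (ε : ℝ) (m j : ℕ) : IsOpen (segBall p ε m j) := by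
  rw [segBall]; split <;> [exact isOpen_ball; exact isOpen_empty]

lemma segPt_mem (p : Y × Y) {m j : ℕ} (hm : 0 < m) (hj : j ≤ m) :
    segPt p.1 p.2 m j ∈ segment ℝ p.1 p.2 := by
  rw [segment_eq_image']
  refine ⟨(j : ℝ) / m, ⟨by positivity, ?_⟩, rfl⟩
  rw [div_le_one (by exact_mod_cast hm)]
  exact_mod_cast hj

lemma segment_subset_segBalls {p : Y × Y} {ε : ℝ} {m : ℕ} (hm : 0 < m)
    (h : ‖p.2 - p.1‖ / m < ε) : segment ℝ p.1 p.2 ⊆ ⋃ j, segBall p ε m j := by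
  intro x hx
  rw [segment_eq_image'] at hx
  obtain ⟨θ, ⟨h0, h1⟩, rfl⟩ := hx
  have hmpos : (0 : ℝ) < m := by exact_mod_cast hm
  set j := ⌊θ * m⌋₊ with hjdef
  have hθm : 0 ≤ θ * m := by positivity
  have hj1 : (j : ℝ) ≤ θ * m := Nat.floor_le hθm
  have hj2 : θ * m < j + 1 := Nat.lt_floor_add_one _
  have hjm : j ≤ m := by
    have : (j : ℝ) ≤ m := hj1.trans (by nlinarith)
    exact_mod_cast this
  refine Set.mem_iUnion.2 ⟨j, ?_⟩
  rw [segBall, if_pos hjm, Metric.mem_ball, dist_eq_norm]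
  have hdiff : θ • (p.2 - p.1) + p.1 - segPt p.1 p.2 m j = (θ - (j : ℝ) / m) • (p.2 - p.1) := by
    rw [segPt, sub_smul]; abel
  have h3 : (p.1 + θ • (p.2 - p.1)) - segPt p.1 p.2 m j = (θ - (j : ℝ) / m) • (p.2 - p.1) := by
    rw [add_comm p.1]; exact hdiff
  rw [h3, norm_smul, Real.norm_eq_abs]
  have habs : |θ - (j : ℝ) / m| ≤ 1 / m := by
    rw [abs_le]
    constructor
    · have : (j : ℝ) / m ≤ θ := by rw [div_le_iff₀ hmpos]; exact hj1
      have h1m : 0 ≤ 1 / (m : ℝ) := by positivity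
      linarith
    · have : θ ≤ ((j : ℝ) + 1) / m := by rw [le_div_iff₀ hmpos]; linarith
      have : θ - (j : ℝ) / m ≤ ((j : ℝ) + 1) / m - (j : ℝ) / m := by linarith
      calc θ - (j : ℝ) / m ≤ ((j : ℝ) + 1) / m - (j : ℝ) / m := this
        _ = 1 / m := by ring
  calc |θ - (j : ℝ) / m| * ‖p.2 - p.1‖ ≤ (1 / m) * ‖p.2 - p.1‖ :=
        mul_le_mul_of_nonneg_right habs (norm_nonneg _)
    _ = ‖p.2 - p.1‖ / m := by ring
    _ < ε := h

lemma diam_segBall_le {p : Y × Y} {ε : ℝ} (m j : ℕ) :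
    Metric.ediam (segBall p ε m j) ≤ ENNReal.ofReal (2 * ε) := by
  rw [segBall]; split
  · rw [← Metric.emetric_ball]
    refine EMetric.diam_ball.trans ?_
    rw [ENNReal.ofReal_mul (by norm_num)]
    simp
  · simp [EMetric.diam_empty]

lemma tsum_diam_segBall_le {p : Y × Y} {ε : ℝ} (hε : 0 ≤ ε) {s : ℝ} (hs : 0 < s) (m : ℕ) :
    ∑' j : ℕ, Metric.ediam (segBall p ε m j) ^ s ≤ ENNReal.ofReal (((m : ℝ) + 1) * (2 * ε) ^ s) := by
  have hzero : ∀ j ∉ Finset.range (m + 1), Metric.ediam (segBall p ε m j) ^ s = 0 := by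
    intro j hj
    rw [Finset.mem_range] at hj
    rw [segBall, if_neg (by omega)]
    simp [EMetric.diam_empty, ENNReal.zero_rpow_of_pos hs]
  rw [tsum_eq_sum hzero]
  calc ∑ j ∈ Finset.range (m + 1), Metric.ediam (segBall p ε m j) ^ s
      ≤ ∑ _j ∈ Finset.range (m + 1), ENNReal.ofReal ((2 * ε) ^ s) := by
        refine Finset.sum_le_sum fun j _ => ?_
        calc Metric.ediam (segBall p ε m j) ^ s ≤ ENNReal.ofReal (2 * ε) ^ s :=
              ENNReal.rpow_le_rpow (diam_segBall_le m j) hs.le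
          _ = ENNReal.ofReal ((2 * ε) ^ s) :=
              ENNReal.ofReal_rpow_of_nonneg (by positivity) hs.le
    _ = (((m : ℕ) + 1 : ℕ) : ℝ≥0∞) * ENNReal.ofReal ((2 * ε) ^ s) := by
        simp [Finset.sum_const, Finset.card_range, nsmul_eq_mul]
    _ = ENNReal.ofReal (((m : ℝ) + 1) * (2 * ε) ^ s) := by
        rw [ENNReal.ofReal_mul (by positivity), ← ENNReal.ofReal_natCast]
        push_cast
        ring_nf
  
lemma diam_segBalls_inter_level {φ : Y →L[ℝ] ℝ} {p : Y × Y} {ε : ℝ} (hε : 0 < ε) {c : ℝ}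
    (hab : φ p.1 ≠ φ p.2) (m : ℕ) :
    Metric.ediam ((⋃ j, segBall p ε m j) ∩ {z | φ z = c}) ≤
      ENNReal.ofReal (2 * ε + 2 * ‖φ‖ * ε * ‖p.2 - p.1‖ / |φ p.2 - φ p.1|) := by
  have hΔ : 0 < |φ p.2 - φ p.1| := abs_pos.2 (sub_ne_zero.2 (Ne.symm hab))
  apply EMetric.diam_le
  rintro x ⟨hx, hxc⟩ y ⟨hy, hyc⟩
  rw [Set.mem_iUnion] at hx hy
  obtain ⟨j, hj⟩ := hx
  obtain ⟨j', hj'⟩ := hy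
  rw [segBall] at hj hj'
  by_cases h1 : j ≤ m; swap
  · rw [if_neg h1] at hj; exact absurd hj (Set.notMem_empty _)
  by_cases h2 : j' ≤ m; swap
  · rw [if_neg h2] at hj'; exact absurd hj' (Set.notMem_empty _)
  rw [if_pos h1, Metric.mem_ball] at hj
  rw [if_pos h2, Metric.mem_ball] at hj'
  set q : ℝ := (j : ℝ) / m with hq
  set q' : ℝ := (j' : ℝ) / m with hq'
  set P := segPt p.1 p.2 m j with hP
  set P' := segPt p.1 p.2 m j' with hP'
  have hφP : φ P = φ p.1 + q * (φ p.2 - φ p.1) := by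
    rw [hP, segPt, map_add, _root_.map_smul, smul_eq_mul, map_sub]
  have hφP' : φ P' = φ p.1 + q' * (φ p.2 - φ p.1) := by
    rw [hP', segPt, map_add, _root_.map_smul, smul_eq_mul, map_sub]
  have hfx : |φ P - c| ≤ ‖φ‖ * ε := by
    have h5 : φ P - c = φ (P - x) := by rw [map_sub, hxc]
    rw [h5, ← Real.norm_eq_abs]
    refine (φ.le_opNorm _).trans ?_
    have : ‖P - x‖ ≤ ε := by
      rw [← dist_eq_norm, dist_comm]; exact hj.le
    exact mul_le_mul_of_nonneg_left this (norm_nonneg _)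
  have hfy : |φ P' - c| ≤ ‖φ‖ * ε := by
    have h5 : φ P' - c = φ (P' - y) := by rw [map_sub, hyc]
    rw [h5, ← Real.norm_eq_abs]
    refine (φ.le_opNorm _).trans ?_
    have : ‖P' - y‖ ≤ ε := by
      rw [← dist_eq_norm, dist_comm]; exact hj'.le
    exact mul_le_mul_of_nonneg_left this (norm_nonneg _)
  have hqq' : |q - q'| * |φ p.2 - φ p.1| ≤ 2 * (‖φ‖ * ε) := by
    have h6 : (q - q') * (φ p.2 - φ p.1) = (φ P - c) - (φ P' - c) := by
      rw [hφP, hφP']; ring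
    calc |q - q'| * |φ p.2 - φ p.1| = |(q - q') * (φ p.2 - φ p.1)| := (abs_mul _ _).symm
      _ = |(φ P - c) - (φ P' - c)| := by rw [h6]
      _ ≤ |φ P - c| + |φ P' - c| := abs_sub _ _
      _ ≤ 2 * (‖φ‖ * ε) := by linarith
  have hPP' : dist P P' ≤ 2 * (‖φ‖ * ε) * ‖p.2 - p.1‖ / |φ p.2 - φ p.1| := by
    have h7 : P - P' = (q - q') • (p.2 - p.1) := by
      rw [hP, hP', segPt, segPt, ← hq, ← hq', sub_smul]; abel
    rw [dist_eq_norm, h7, norm_smul, Real.norm_eq_abs]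
    have h8 : |q - q'| ≤ 2 * (‖φ‖ * ε) / |φ p.2 - φ p.1| := (le_div_iff₀ hΔ).2 hqq'
    calc |q - q'| * ‖p.2 - p.1‖ ≤ (2 * (‖φ‖ * ε) / |φ p.2 - φ p.1|) * ‖p.2 - p.1‖ :=
          mul_le_mul_of_nonneg_right h8 (norm_nonneg _)
      _ = 2 * (‖φ‖ * ε) * ‖p.2 - p.1‖ / |φ p.2 - φ p.1| := by ring
  rw [edist_dist]
  apply ENNReal.ofReal_le_ofReal
  calc dist x y ≤ dist x P + dist P P' + dist P' y := dist_triangle4 x P P' y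
    _ ≤ ε + 2 * (‖φ‖ * ε) * ‖p.2 - p.1‖ / |φ p.2 - φ p.1| + ε := by
        have hyP' : dist P' y ≤ ε := by rw [dist_comm]; exact hj'.le
        have hxP : dist x P ≤ ε := hj.le
        linarith
    _ = 2 * ε + 2 * ‖φ‖ * ε * ‖p.2 - p.1‖ / |φ p.2 - φ p.1| := by ring

lemma segment_inter_level_subsingleton {φ : Y →L[ℝ] ℝ} {a b : Y} (hab : φ a ≠ φ b) (c : ℝ) :
    (segment ℝ a b ∩ {z | φ z = c}).Subsingleton := by
  rintro x ⟨hx, hxc⟩ y ⟨hy, hyc⟩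
  rw [segment_eq_image'] at hx hy
  obtain ⟨θ, _, rfl⟩ := hx
  obtain ⟨θ', _, rfl⟩ := hy
  have hc : φ b - φ a ≠ 0 := sub_ne_zero.2 (Ne.symm hab)
  have h1 : φ a + θ * (φ b - φ a) = c := by
    simpa [map_add, _root_.map_smul, map_sub, smul_eq_mul] using hxc
  have h2 : φ a + θ' * (φ b - φ a) = c := by
    simpa [map_add, _root_.map_smul, map_sub, smul_eq_mul] using hyc
  have : θ = θ' := by
    have h3 : (θ - θ') * (φ b - φ a) = 0 := by linarith [h1, h2]; 
    rcases mul_eq_zero.1 h3 with h | h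
    · linarith [sub_eq_zero.1 h]
    · exact absurd h hc
  rw [this]

/-! ### The numerical data of the construction -/

noncomputable def len (t : Y × Y × Y) : ℝ := max ‖t.2.1 - t.1‖ ‖t.2.2 - t.2.1‖

noncomputable def del (φ : Y →L[ℝ] ℝ) (t : Y × Y × Y) : ℝ :=
  min |φ t.2.1 - φ t.1| |φ t.2.2 - φ t.2.1|

noncomputable def eps (φ : Y →L[ℝ] ℝ) (t : Y × Y × Y) (n : ℕ) : ℝ :=
  min ((2⁻¹ : ℝ) ^ (n + 1) * (del φ t / (del φ t + ‖φ‖ * len t)))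
      (((2⁻¹ : ℝ) ^ (n + 1) / (1 + len t)) ^ (n + 1))

noncomputable def mm (φ : Y →L[ℝ] ℝ) (t : Y × Y × Y) (n : ℕ) : ℕ :=
  ⌈len t / eps φ t n⌉₊ + 1

noncomputable def NB (φ : Y →L[ℝ] ℝ) (t : Y × Y × Y) (n : ℕ) : Set Y :=
  ⋃ (b : Bool) (j : ℕ), segBall (pr t b) (eps φ t n) (mm φ t n) j

noncomputable def GSet (φ : Y →L[ℝ] ℝ) (f : ℕ → Y × Y × Y) : Set Y :=
  ⋂ k : ℕ, ((⋃ (n : ℕ) (_ : n ≤ k), wedge (f n)) ∪ ⋃ (n : ℕ) (_ : k < n), NB φ (f n) n)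

lemma len_nonneg (t : Y × Y × Y) : 0 ≤ len t :=
  (norm_nonneg _).trans (le_max_left _ _)

lemma norm_pr_le (t : Y × Y × Y) (b : Bool) : ‖(pr t b).2 - (pr t b).1‖ ≤ len t := by
  cases b <;> simp [pr, len, le_max_left, le_max_right]

lemma del_le_pr {φ : Y →L[ℝ] ℝ} (t : Y × Y × Y) (b : Bool) :
    del φ t ≤ |φ (pr t b).2 - φ (pr t b).1| := by
  cases b <;> simp [pr, del, min_le_left, min_le_right]

lemma pr_ne {φ : Y →L[ℝ] ℝ} {t : Y × Y × Y} (hd : 0 < del φ t) (b : Bool) :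
    φ (pr t b).1 ≠ φ (pr t b).2 := by
  have := lt_of_lt_of_le hd (del_le_pr t b)
  have := abs_pos.1 this
  exact fun h => this (by rw [h, sub_self])

lemma denom_pos {φ : Y →L[ℝ] ℝ} {t : Y × Y × Y} (hd : 0 < del φ t) :
    0 < del φ t + ‖φ‖ * len t :=
  add_pos_of_pos_of_nonneg hd (mul_nonneg (norm_nonneg _) (len_nonneg t))

lemma eps_pos {φ : Y →L[ℝ] ℝ} {t : Y × Y × Y} (hd : 0 < del φ t) (n : ℕ) :
    0 < eps φ t n := by
  apply lt_min
  · exact mul_pos (by positivity) (div_pos hd (denom_pos hd))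
  · have h1 : (0:ℝ) < 1 + len t := by linarith [len_nonneg t]
    positivity

lemma base_nonneg (t : Y × Y × Y) (n : ℕ) : (0:ℝ) ≤ (2⁻¹ : ℝ) ^ (n + 1) / (1 + len t) := by
  have h1 : (0:ℝ) < 1 + len t := by linarith [len_nonneg t]
  positivity

lemma base_le_one (t : Y × Y × Y) (n : ℕ) : (2⁻¹ : ℝ) ^ (n + 1) / (1 + len t) ≤ 1 := by
  have h1 : (0:ℝ) < 1 + len t := by linarith [len_nonneg t]
  rw [div_le_one h1]
  calc (2⁻¹:ℝ) ^ (n+1) ≤ 1 := pow_le_one₀ (by norm_num) (by norm_num)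
    _ ≤ 1 + len t := by linarith [len_nonneg t]

lemma eps_le_pow {φ : Y →L[ℝ] ℝ} (t : Y × Y × Y) (n : ℕ) :
    eps φ t n ≤ (2⁻¹ : ℝ) ^ (n + 1) := by
  refine (min_le_right _ _).trans ?_
  calc ((2⁻¹:ℝ)^(n+1) / (1 + len t)) ^ (n+1)
      ≤ ((2⁻¹:ℝ)^(n+1) / (1 + len t)) ^ 1 :=
        pow_le_pow_of_le_one (base_nonneg t n) (base_le_one t n) (by omega)
    _ = (2⁻¹:ℝ)^(n+1) / (1 + len t) := pow_one _
    _ ≤ (2⁻¹:ℝ)^(n+1) := by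
        have h1 : (1:ℝ) ≤ 1 + len t := by linarith [len_nonneg t]
        exact div_le_self (by positivity) h1

lemma eps_le_one {φ : Y →L[ℝ] ℝ} (t : Y × Y × Y) (n : ℕ) : eps φ t n ≤ 1 :=
  (eps_le_pow t n).trans (pow_le_one₀ (by norm_num) (by norm_num))

lemma eps_rpow_le {φ : Y →L[ℝ] ℝ} {t : Y × Y × Y} (hd : 0 < del φ t) {q n : ℕ}
    (hq : q ≠ 0) (hqn : q ≤ n + 1) :
    (eps φ t n) ^ ((q : ℝ)⁻¹) ≤ (2⁻¹ : ℝ) ^ (n + 1) / (1 + len t) := by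
  set base := (2⁻¹ : ℝ) ^ (n + 1) / (1 + len t) with hbase
  have h1 : eps φ t n ≤ base ^ q :=
    (min_le_right _ _).trans (pow_le_pow_of_le_one (base_nonneg t n) (base_le_one t n) hqn)
  calc (eps φ t n) ^ ((q : ℝ)⁻¹) ≤ (base ^ q) ^ ((q : ℝ)⁻¹) :=
        Real.rpow_le_rpow (eps_pos hd n).le h1 (by positivity)
    _ = base := Real.pow_rpow_inv_natCast (base_nonneg t n) hq

lemma mm_pos {φ : Y →L[ℝ] ℝ} (t : Y × Y × Y) (n : ℕ) : 0 < mm φ t n := Nat.succ_pos _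

lemma len_div_mm_lt {φ : Y →L[ℝ] ℝ} {t : Y × Y × Y} (hd : 0 < del φ t) (n : ℕ) (b : Bool) :
    ‖(pr t b).2 - (pr t b).1‖ / (mm φ t n) < eps φ t n := by
  have hε := eps_pos hd n
  have hm : (len t / eps φ t n : ℝ) < mm φ t n := by
    rw [mm]
    push_cast
    calc len t / eps φ t n ≤ (⌈len t / eps φ t n⌉₊ : ℝ) := Nat.le_ceil _
      _ < ⌈len t / eps φ t n⌉₊ + 1 := by linarith
  have hmpos : (0:ℝ) < (mm φ t n : ℝ) := by exact_mod_cast mm_pos t n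
  rw [div_lt_iff₀ hmpos]
  calc ‖(pr t b).2 - (pr t b).1‖ ≤ len t := norm_pr_le t b
    _ < eps φ t n * mm φ t n := by
        rw [div_lt_iff₀ hε] at hm
        linarith [hm]

/-- The key numerical estimate for the Hausdorff-dimension bound. -/
lemma main_bound {φ : Y →L[ℝ] ℝ} {t : Y × Y × Y} (hd : 0 < del φ t) {q : ℕ} (hq : 1 ≤ q)
    {n : ℕ} (hn : q ≤ n + 1) :
    ((mm φ t n : ℝ) + 1) * (2 * eps φ t n) ^ ((1 : ℝ) + (q : ℝ)⁻¹) ≤ 16 * (2⁻¹ : ℝ) ^ n := by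
  set ε := eps φ t n with hε
  set L := len t with hL
  have hε0 : 0 < ε := eps_pos hd n
  have hε1 : ε ≤ 1 := eps_le_one t n
  have hεp : ε ≤ (2⁻¹:ℝ)^(n+1) := eps_le_pow t n
  have hL0 : 0 ≤ L := len_nonneg t
  have hrq : (eps φ t n) ^ ((q : ℝ)⁻¹) ≤ (2⁻¹ : ℝ) ^ (n + 1) / (1 + L) :=
    eps_rpow_le hd (by omega) hn
  set s : ℝ := 1 + (q:ℝ)⁻¹ with hs
  have hs1 : (1:ℝ) ≤ s := by
    rw [hs]
    have : (0:ℝ) ≤ (q:ℝ)⁻¹ := by positivity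
    linarith
  have hs2 : s ≤ 2 := by
    rw [hs]
    have : (q:ℝ)⁻¹ ≤ 1 := by
      rw [inv_le_one_iff₀]
      right; exact_mod_cast hq
    linarith
  -- (2ε)^s = 2^s * ε * ε^(1/q)
  have hsplit : (2 * ε) ^ s = (2:ℝ) ^ s * (ε * ε ^ ((q:ℝ)⁻¹)) := by
    rw [Real.mul_rpow (by norm_num) hε0.le]
    congr 1
    rw [hs, Real.rpow_add hε0, Real.rpow_one]
  have h2s : (2:ℝ) ^ s ≤ 4 := by
    calc (2:ℝ) ^ s ≤ (2:ℝ) ^ (2:ℝ) := Real.rpow_le_rpow_of_exponent_le one_le_two hs2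
      _ = 4 := by
        rw [show (2:ℝ) = ((2:ℕ):ℝ) by norm_num, Real.rpow_natCast]
        norm_num
  have hm1 : (mm φ t n : ℝ) + 1 ≤ L / ε + 3 := by
    rw [mm]
    push_cast
    have := Nat.ceil_lt_add_one (by positivity : (0:ℝ) ≤ L / ε)
    linarith
  have hεq1 : ε ^ ((q:ℝ)⁻¹) ≤ 1 := Real.rpow_le_one hε0.le hε1 (by positivity)
  have hεq0 : 0 ≤ ε ^ ((q:ℝ)⁻¹) := Real.rpow_nonneg hε0.le _
  have hkey : (L / ε + 3) * (ε * ε ^ ((q:ℝ)⁻¹)) ≤ 4 * (2⁻¹:ℝ)^(n+1) := by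
    have hexp : (L / ε + 3) * (ε * ε ^ ((q:ℝ)⁻¹))
        = L * ε ^ ((q:ℝ)⁻¹) + 3 * (ε * ε ^ ((q:ℝ)⁻¹)) := by
      field_simp
    rw [hexp]
    have hL1 : 0 < 1 + L := by linarith
    have t1 : L * ε ^ ((q:ℝ)⁻¹) ≤ (2⁻¹:ℝ)^(n+1) := by
      calc L * ε ^ ((q:ℝ)⁻¹) ≤ L * ((2⁻¹:ℝ)^(n+1) / (1 + L)) :=
            mul_le_mul_of_nonneg_left hrq hL0
        _ = (2⁻¹:ℝ)^(n+1) * (L / (1 + L)) := by ring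
        _ ≤ (2⁻¹:ℝ)^(n+1) * 1 := by
            refine mul_le_mul_of_nonneg_left ?_ (by positivity)
            rw [div_le_one hL1]; linarith
        _ = (2⁻¹:ℝ)^(n+1) := mul_one _
    have t2 : ε * ε ^ ((q:ℝ)⁻¹) ≤ (2⁻¹:ℝ)^(n+1) := by
      calc ε * ε ^ ((q:ℝ)⁻¹) ≤ ε * 1 := mul_le_mul_of_nonneg_left hεq1 hε0.le
        _ = ε := mul_one _
        _ ≤ (2⁻¹:ℝ)^(n+1) := hεp
    linarith
  have hnonneg : (0:ℝ) ≤ ε * ε ^ ((q:ℝ)⁻¹) := by positivity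
  calc ((mm φ t n : ℝ) + 1) * (2 * ε) ^ s
      = ((mm φ t n : ℝ) + 1) * ((2:ℝ)^s * (ε * ε ^ ((q:ℝ)⁻¹))) := by rw [hsplit]
    _ ≤ (L / ε + 3) * ((2:ℝ)^s * (ε * ε ^ ((q:ℝ)⁻¹))) := by
        refine mul_le_mul_of_nonneg_right hm1 ?_
        have : (0:ℝ) ≤ (2:ℝ)^s := Real.rpow_nonneg (by norm_num) _
        positivity
    _ = (2:ℝ)^s * ((L / ε + 3) * (ε * ε ^ ((q:ℝ)⁻¹))) := by ring
    _ ≤ 4 * (4 * (2⁻¹:ℝ)^(n+1)) := by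
        refine mul_le_mul h2s hkey ?_ (by norm_num)
        have h3 : (0:ℝ) ≤ L / ε + 3 := by positivity
        positivity
    _ = 16 * ((2⁻¹:ℝ)^n * 2⁻¹) := by rw [pow_succ]; ring
    _ ≤ 16 * (2⁻¹:ℝ)^n := by
        have : (0:ℝ) ≤ (2⁻¹:ℝ)^n := by positivity
        nlinarith
      
/-- The key numerical estimate for the level sets. -/
lemma level_bound {φ : Y →L[ℝ] ℝ} {t : Y × Y × Y} (hd : 0 < del φ t) (n : ℕ) (b : Bool) :
    2 * eps φ t n + 2 * ‖φ‖ * eps φ t n * ‖(pr t b).2 - (pr t b).1‖ /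
      |φ (pr t b).2 - φ (pr t b).1| ≤ (2⁻¹ : ℝ) ^ n := by
  set ε := eps φ t n with hεdef
  set D := del φ t with hD
  set L := len t with hL
  have hε0 : 0 < ε := eps_pos hd n
  have hΔ : 0 < |φ (pr t b).2 - φ (pr t b).1| := lt_of_lt_of_le hd (del_le_pr t b)
  have hDP : 0 < D + ‖φ‖ * L := denom_pos hd
  have hεle : ε ≤ (2⁻¹:ℝ)^(n+1) * (D / (D + ‖φ‖ * L)) := min_le_left _ _
  have hkey : ε * (D + ‖φ‖ * L) ≤ (2⁻¹:ℝ)^(n+1) * D := by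
    have h9 : ε ≤ (2⁻¹:ℝ)^(n+1) * D / (D + ‖φ‖ * L) := by
      calc ε ≤ (2⁻¹:ℝ)^(n+1) * (D / (D + ‖φ‖ * L)) := hεle
        _ = (2⁻¹:ℝ)^(n+1) * D / (D + ‖φ‖ * L) := by ring
    exact (le_div_iff₀ hDP).1 h9
  -- bound the second summand by the one with D, L
  have h2 : 2 * ‖φ‖ * ε * ‖(pr t b).2 - (pr t b).1‖ / |φ (pr t b).2 - φ (pr t b).1|
      ≤ 2 * ‖φ‖ * ε * L / D := by
    have h0 : (0:ℝ) ≤ 2 * ‖φ‖ * ε :=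
      mul_nonneg (mul_nonneg (by norm_num) (norm_nonneg _)) hε0.le
    have ha : 2 * ‖φ‖ * ε * ‖(pr t b).2 - (pr t b).1‖ ≤ 2 * ‖φ‖ * ε * L :=
      mul_le_mul_of_nonneg_left (norm_pr_le t b) h0
    have hL0' : (0:ℝ) ≤ 2 * ‖φ‖ * ε * L := mul_nonneg h0 (len_nonneg t)
    calc 2 * ‖φ‖ * ε * ‖(pr t b).2 - (pr t b).1‖ / |φ (pr t b).2 - φ (pr t b).1|
        ≤ 2 * ‖φ‖ * ε * L / |φ (pr t b).2 - φ (pr t b).1| := by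
          gcongr
      _ ≤ 2 * ‖φ‖ * ε * L / D := by
          gcongr
          exact del_le_pr t b
  have h3 : 2 * ε + 2 * ‖φ‖ * ε * L / D ≤ (2⁻¹:ℝ)^n := by
    have hgoal : (2 * ε + 2 * ‖φ‖ * ε * L / D) * D ≤ (2⁻¹:ℝ)^n * D := by
      have hexp : (2 * ε + 2 * ‖φ‖ * ε * L / D) * D = 2 * (ε * (D + ‖φ‖ * L)) := by
        field_simp
      rw [hexp]
      calc 2 * (ε * (D + ‖φ‖ * L)) ≤ 2 * ((2⁻¹:ℝ)^(n+1) * D) := by linarith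
        _ = (2⁻¹:ℝ)^n * D := by rw [pow_succ]; ring
    exact le_of_mul_le_mul_right hgoal hd
  linarith

/-! ### ENNReal helper lemmas -/

lemma ofReal_half_pow (n : ℕ) : ENNReal.ofReal ((2⁻¹ : ℝ) ^ n) = (2⁻¹ : ℝ≥0∞) ^ n := by
  rw [ENNReal.ofReal_pow (by norm_num)]
  congr 1
  rw [show ((2:ℝ))⁻¹ = 1/2 by norm_num]
  rw [ENNReal.ofReal_div_of_pos (by norm_num)]
  simp

lemma tsum_tail_le (c : ℝ≥0∞) (k : ℕ) (f : ℕ → ℝ≥0∞)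
    (h : ∀ n, f n ≤ if k < n then c * (2⁻¹ : ℝ≥0∞) ^ n else 0) :
    ∑' n, f n ≤ c * (2⁻¹ : ℝ≥0∞) ^ k := by
  have step1 : ∑' n, f n ≤ ∑' n, (if k < n then c * (2⁻¹ : ℝ≥0∞) ^ n else 0) :=
    ENNReal.tsum_le_tsum h
  have hinj : Function.Injective (fun i : ℕ => i + (k + 1)) := add_left_injective (k + 1)
  have hsupp : Function.support (fun n => if k < n then c * (2⁻¹ : ℝ≥0∞) ^ n else 0)
      ⊆ Set.range (fun i : ℕ => i + (k + 1)) := by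
    intro n hn
    rw [Function.mem_support] at hn
    by_cases hkn : k < n
    · refine ⟨n - (k + 1), ?_⟩
      show n - (k + 1) + (k + 1) = n
      omega
    · rw [if_neg hkn] at hn; exact absurd rfl hn
  have step2 : ∑' (i : ℕ), (if k < i + (k+1) then c * (2⁻¹ : ℝ≥0∞) ^ (i + (k+1)) else 0)
      = ∑' n, (if k < n then c * (2⁻¹ : ℝ≥0∞) ^ n else 0) :=
    hinj.tsum_eq hsupp
  have step3 : ∑' (i : ℕ), (if k < i + (k+1) then c * (2⁻¹ : ℝ≥0∞) ^ (i + (k+1)) else 0)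
      = c * (2⁻¹:ℝ≥0∞) ^ (k+1) * ∑' (i : ℕ), (2⁻¹ : ℝ≥0∞) ^ i := by
    rw [← ENNReal.tsum_mul_left]
    congr 1
    ext i
    rw [if_pos (by omega)]
    rw [pow_add]
    ring
  have step4 : ∑' (i : ℕ), (2⁻¹ : ℝ≥0∞) ^ i = 2 := by
    rw [ENNReal.tsum_geometric]
    norm_num
  calc ∑' n, f n ≤ ∑' n, (if k < n then c * (2⁻¹ : ℝ≥0∞) ^ n else 0) := step1
    _ = c * (2⁻¹:ℝ≥0∞) ^ (k+1) * 2 := by rw [← step2, step3, step4]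
    _ = c * (2⁻¹:ℝ≥0∞) ^ k * (2⁻¹ * 2) := by rw [pow_succ]; ring
    _ = c * (2⁻¹:ℝ≥0∞) ^ k := by
        rw [ENNReal.inv_mul_cancel (by norm_num) (by norm_num), mul_one]

lemma half_pow_le {n k : ℕ} (h : k ≤ n) : ((2⁻¹ : ℝ≥0∞)) ^ n ≤ (2⁻¹ : ℝ≥0∞) ^ k :=
  pow_le_pow_of_le_one zero_le (by norm_num) h

lemma tendsto_half_pow : Tendsto (fun k : ℕ => (2⁻¹ : ℝ≥0∞) ^ k) atTop (𝓝 0) :=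
  ENNReal.tendsto_pow_atTop_nhds_zero_of_lt_one (by norm_num)


/-! ### Topological structure of the construction -/

lemma isClosed_wedge (t : Y × Y × Y) : IsClosed (wedge t) := by
  have hseg : ∀ a b : Y, IsClosed (segment ℝ a b) := by
    intro a b
    rw [segment_eq_image']
    exact (isCompact_Icc.image (by fun_prop)).isClosed
  exact (hseg _ _).union (hseg _ _)

lemma isOpen_NB (φ : Y →L[ℝ] ℝ) (t : Y × Y × Y) (n : ℕ) : IsOpen (NB φ t n) :=
  isOpen_iUnion fun b => isOpen_iUnion fun j => isOpen_segBall _ _ _ _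

lemma isGδ_GSet (φ : Y →L[ℝ] ℝ) (f : ℕ → Y × Y × Y) : IsGδ (GSet φ f) := by
  refine IsGδ.iInter fun k => IsGδ.union ?_ ?_
  · refine IsClosed.isGδ ?_
    exact Set.Finite.isClosed_biUnion (Set.finite_le_nat k) fun n _ => isClosed_wedge _
  · exact (isOpen_iUnion fun n => isOpen_iUnion fun _ => isOpen_NB φ (f n) n).isGδ

lemma wedge_subset_NB {φ : Y →L[ℝ] ℝ} {t : Y × Y × Y} (hd : 0 < del φ t) (n : ℕ) :
    wedge t ⊆ NB φ t n := by
  rw [wedge_eq]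
  rintro x (hx | hx)
  · exact Set.mem_iUnion.2
      ⟨false, segment_subset_segBalls (mm_pos t n) (len_div_mm_lt hd n false) hx⟩
  · exact Set.mem_iUnion.2
      ⟨true, segment_subset_segBalls (mm_pos t n) (len_div_mm_lt hd n true) hx⟩

lemma wedge_subset_GSet {φ : Y →L[ℝ] ℝ} {f : ℕ → Y × Y × Y} (hd : ∀ n, 0 < del φ (f n))
    (n : ℕ) : wedge (f n) ⊆ GSet φ f := by
  intro x hx
  refine Set.mem_iInter.2 fun k => ?_
  rcases le_or_gt n k with h | h
  · exact Or.inl (Set.mem_iUnion₂.2 ⟨n, h, hx⟩)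
  · exact Or.inr (Set.mem_iUnion₂.2 ⟨n, h, wedge_subset_NB (hd n) n hx⟩)

lemma GSet_subset_tail {φ : Y →L[ℝ] ℝ} {f : ℕ → Y × Y × Y} (k : ℕ) :
    GSet φ f \ (⋃ n, wedge (f n)) ⊆ ⋃ (n : ℕ) (_ : k < n), NB φ (f n) n := by
  rintro x ⟨hx, hxw⟩
  rcases Set.mem_iInter.1 hx k with h | h
  · exfalso
    obtain ⟨n, _, hxn⟩ := Set.mem_iUnion₂.1 h
    exact hxw (Set.mem_iUnion.2 ⟨n, hxn⟩)
  · exact h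

/-! ### The covering families -/

noncomputable def TF (φ : Y →L[ℝ] ℝ) (f : ℕ → Y × Y × Y) (k : ℕ) (i : ℕ × Bool × ℕ) : Set Y :=
  if k < i.1 then segBall (pr (f i.1) i.2.1) (eps φ (f i.1) i.1) (mm φ (f i.1) i.1) i.2.2 else ∅

noncomputable def TL (φ : Y →L[ℝ] ℝ) (f : ℕ → Y × Y × Y) (c : ℝ) (k : ℕ) (i : ℕ × Bool) :
    Set Y :=
  if k < i.1 then
    (⋃ j, segBall (pr (f i.1) i.2) (eps φ (f i.1) i.1) (mm φ (f i.1) i.1) j) ∩ {z | φ z = c}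
  else ∅

section Measure

variable [MeasurableSpace Y] [BorelSpace Y]

lemma hm_tail_zero (φ : Y →L[ℝ] ℝ) (f : ℕ → Y × Y × Y) (hd : ∀ n, 0 < del φ (f n))
    {q : ℕ} (hq : 1 ≤ q) {E : Set Y}
    (hE : ∀ k : ℕ, E ⊆ ⋃ (n : ℕ) (_ : k < n), NB φ (f n) n) :
    μH[(1 : ℝ) + (q : ℝ)⁻¹] E = 0 := by
  set s : ℝ := 1 + (q : ℝ)⁻¹ with hs
  have hs0 : 0 < s := by rw [hs]; positivity
  have hcov : ∀ k : ℕ, E ⊆ ⋃ i, TF φ f k i := by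
    intro k x hx
    obtain ⟨n, hn, hxn⟩ := Set.mem_iUnion₂.1 (hE k hx)
    rw [NB] at hxn
    obtain ⟨b, hb⟩ := Set.mem_iUnion.1 hxn
    obtain ⟨j, hj⟩ := Set.mem_iUnion.1 hb
    refine Set.mem_iUnion.2 ⟨(n, b, j), ?_⟩
    rw [TF, if_pos hn]
    exact hj
  have hdiam : ∀ (k : ℕ) (i : ℕ × Bool × ℕ), Metric.ediam (TF φ f k i) ≤ (2⁻¹ : ℝ≥0∞) ^ k := by
    intro k i
    rw [TF]
    split
    case isTrue h =>
      refine (diam_segBall_le _ _).trans ?_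
      have e1 : eps φ (f i.1) i.1 ≤ (2⁻¹ : ℝ) ^ (k + 2) :=
        (eps_le_pow _ _).trans (pow_le_pow_of_le_one (by norm_num) (by norm_num) (by omega))
      have h1 : 2 * eps φ (f i.1) i.1 ≤ (2⁻¹ : ℝ) ^ k := by
        calc 2 * eps φ (f i.1) i.1 ≤ 2 * (2⁻¹ : ℝ) ^ (k + 2) := by linarith
          _ = (2⁻¹ : ℝ) ^ (k + 1) := by rw [pow_succ]; ring
          _ ≤ (2⁻¹ : ℝ) ^ k := pow_le_pow_of_le_one (by norm_num) (by norm_num) (by omega)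
      calc ENNReal.ofReal (2 * eps φ (f i.1) i.1) ≤ ENNReal.ofReal ((2⁻¹ : ℝ) ^ k) :=
            ENNReal.ofReal_le_ofReal h1
        _ = (2⁻¹ : ℝ≥0∞) ^ k := ofReal_half_pow k
    case isFalse h => simp
  have key := Measure.hausdorffMeasure_le_liminf_tsum s E (fun k : ℕ => (2⁻¹ : ℝ≥0∞) ^ k)
    tendsto_half_pow (TF φ f) (Filter.Eventually.of_forall hdiam)
    (Filter.Eventually.of_forall hcov)
  refine le_antisymm (key.trans ?_) zero_le
  have hsum : ∀ k : ℕ, q ≤ k →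
      (∑' i, Metric.ediam (TF φ f k i) ^ s) ≤ (32 : ℝ≥0∞) * (2⁻¹ : ℝ≥0∞) ^ k := by
    intro k hk
    have hsplit : ∑' (i : ℕ × Bool × ℕ), Metric.ediam (TF φ f k i) ^ s
        = ∑' (n : ℕ) (b : Bool) (j : ℕ), Metric.ediam (TF φ f k (n, b, j)) ^ s := by
      rw [ENNReal.tsum_prod']
      congr 1
      funext n
      rw [ENNReal.tsum_prod']
    rw [hsplit]
    refine tsum_tail_le 32 k _ fun n => ?_
    by_cases hn : k < n
    · rw [if_pos hn]
      have hperb : ∀ b : Bool,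
          (∑' j, Metric.ediam (TF φ f k (n, b, j)) ^ s) ≤ (16 : ℝ≥0∞) * (2⁻¹ : ℝ≥0∞) ^ n := by
        intro b
        have h1 : ∀ j : ℕ,
            TF φ f k (n, b, j) = segBall (pr (f n) b) (eps φ (f n) n) (mm φ (f n) n) j := by
          intro j; rw [TF, if_pos hn]
        simp_rw [h1]
        refine (tsum_diam_segBall_le (eps_pos (hd n) n).le hs0 _).trans ?_
        have h2 : ((mm φ (f n) n : ℝ) + 1) * (2 * eps φ (f n) n) ^ s ≤ 16 * (2⁻¹ : ℝ) ^ n :=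
          main_bound (hd n) hq (by omega)
        calc ENNReal.ofReal (((mm φ (f n) n : ℝ) + 1) * (2 * eps φ (f n) n) ^ s)
            ≤ ENNReal.ofReal (16 * (2⁻¹ : ℝ) ^ n) := ENNReal.ofReal_le_ofReal h2
          _ = (16 : ℝ≥0∞) * (2⁻¹ : ℝ≥0∞) ^ n := by
              rw [ENNReal.ofReal_mul (by norm_num), ofReal_half_pow]
              norm_num
      calc ∑' (b : Bool) (j : ℕ), Metric.ediam (TF φ f k (n, b, j)) ^ s
          = (∑' j, Metric.ediam (TF φ f k (n, false, j)) ^ s)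
            + ∑' j, Metric.ediam (TF φ f k (n, true, j)) ^ s := tsum_bool _
        _ ≤ (16 : ℝ≥0∞) * (2⁻¹ : ℝ≥0∞) ^ n + (16 : ℝ≥0∞) * (2⁻¹ : ℝ≥0∞) ^ n :=
            add_le_add (hperb false) (hperb true)
        _ = 32 * (2⁻¹ : ℝ≥0∞) ^ n := by ring
    · rw [if_neg hn]
      have h1 : ∀ (b : Bool) (j : ℕ), TF φ f k (n, b, j) = ∅ := by
        intro b j; rw [TF, if_neg hn]
      simp [h1, ENNReal.zero_rpow_of_pos hs0]
  calc Filter.liminf (fun k => ∑' i, Metric.ediam (TF φ f k i) ^ s) atTop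
      ≤ Filter.liminf (fun k : ℕ => (32 : ℝ≥0∞) * (2⁻¹ : ℝ≥0∞) ^ k) atTop :=
        Filter.liminf_le_liminf (Filter.eventually_atTop.2 ⟨q, hsum⟩)
    _ = 0 := by
        have h3 : Tendsto (fun k : ℕ => (32 : ℝ≥0∞) * (2⁻¹ : ℝ≥0∞) ^ k) atTop (𝓝 (32 * 0)) :=
          ENNReal.Tendsto.const_mul tendsto_half_pow (Or.inr (by norm_num))
        rw [mul_zero] at h3
        exact h3.liminf_eq

lemma hm_level_zero (φ : Y →L[ℝ] ℝ) (f : ℕ → Y × Y × Y) (hd : ∀ n, 0 < del φ (f n))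
    {E : Set Y} (hE : ∀ k : ℕ, E ⊆ ⋃ (n : ℕ) (_ : k < n), NB φ (f n) n) (c : ℝ) :
    μH[(1 : ℝ)] (E ∩ {z | φ z = c}) = 0 := by
  have hcov : ∀ k : ℕ, E ∩ {z | φ z = c} ⊆ ⋃ i, TL φ f c k i := by
    rintro k x ⟨hx, hxc⟩
    obtain ⟨n, hn, hxn⟩ := Set.mem_iUnion₂.1 (hE k hx)
    rw [NB] at hxn
    obtain ⟨b, hb⟩ := Set.mem_iUnion.1 hxn
    refine Set.mem_iUnion.2 ⟨(n, b), ?_⟩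
    rw [TL, if_pos hn]
    exact ⟨hb, hxc⟩
  have hdiam : ∀ (k : ℕ) (i : ℕ × Bool), Metric.ediam (TL φ f c k i) ≤ (2⁻¹ : ℝ≥0∞) ^ k := by
    intro k i
    rw [TL]
    split
    case isTrue h =>
      calc Metric.ediam ((⋃ j, segBall (pr (f i.1) i.2) (eps φ (f i.1) i.1)
              (mm φ (f i.1) i.1) j) ∩ {z | φ z = c})
          ≤ ENNReal.ofReal (2 * eps φ (f i.1) i.1 + 2 * ‖φ‖ * eps φ (f i.1) i.1 *
              ‖(pr (f i.1) i.2).2 - (pr (f i.1) i.2).1‖ /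
              |φ (pr (f i.1) i.2).2 - φ (pr (f i.1) i.2).1|) :=
            diam_segBalls_inter_level (eps_pos (hd i.1) i.1) (pr_ne (hd i.1) i.2) _
        _ ≤ ENNReal.ofReal ((2⁻¹ : ℝ) ^ i.1) :=
            ENNReal.ofReal_le_ofReal (level_bound (hd i.1) i.1 i.2)
        _ = (2⁻¹ : ℝ≥0∞) ^ i.1 := ofReal_half_pow _
        _ ≤ (2⁻¹ : ℝ≥0∞) ^ k := half_pow_le (le_of_lt h)
    case isFalse h => simp
  have key := Measure.hausdorffMeasure_le_liminf_tsum (1 : ℝ) (E ∩ {z | φ z = c})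
    (fun k : ℕ => (2⁻¹ : ℝ≥0∞) ^ k) tendsto_half_pow (TL φ f c)
    (Filter.Eventually.of_forall hdiam) (Filter.Eventually.of_forall hcov)
  refine le_antisymm (key.trans ?_) zero_le
  have hsum : ∀ k : ℕ,
      (∑' i, Metric.ediam (TL φ f c k i) ^ (1:ℝ)) ≤ (2 : ℝ≥0∞) * (2⁻¹ : ℝ≥0∞) ^ k := by
    intro k
    have hsplit : ∑' (i : ℕ × Bool), Metric.ediam (TL φ f c k i) ^ (1:ℝ)
        = ∑' (n : ℕ) (b : Bool), Metric.ediam (TL φ f c k (n, b)) ^ (1:ℝ) :=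
      ENNReal.tsum_prod'
    rw [hsplit]
    refine tsum_tail_le 2 k _ fun n => ?_
    by_cases hn : k < n
    · rw [if_pos hn]
      have hb : ∀ b : Bool, Metric.ediam (TL φ f c k (n, b)) ^ (1:ℝ) ≤ (2⁻¹ : ℝ≥0∞) ^ n := by
        intro b
        rw [ENNReal.rpow_one]
        rw [TL, if_pos hn]
        calc Metric.ediam ((⋃ j, segBall (pr (f n) b) (eps φ (f n) n) (mm φ (f n) n) j)
                ∩ {z | φ z = c})
            ≤ ENNReal.ofReal (2 * eps φ (f n) n + 2 * ‖φ‖ * eps φ (f n) n *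
                ‖(pr (f n) b).2 - (pr (f n) b).1‖ / |φ (pr (f n) b).2 - φ (pr (f n) b).1|) :=
              diam_segBalls_inter_level (eps_pos (hd n) n) (pr_ne (hd n) b) _
          _ ≤ ENNReal.ofReal ((2⁻¹ : ℝ) ^ n) :=
              ENNReal.ofReal_le_ofReal (level_bound (hd n) n b)
          _ = (2⁻¹ : ℝ≥0∞) ^ n := ofReal_half_pow _
      calc ∑' (b : Bool), Metric.ediam (TL φ f c k (n, b)) ^ (1:ℝ)
          = Metric.ediam (TL φ f c k (n, false)) ^ (1:ℝ)
            + Metric.ediam (TL φ f c k (n, true)) ^ (1:ℝ) := tsum_bool _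
        _ ≤ (2⁻¹ : ℝ≥0∞) ^ n + (2⁻¹ : ℝ≥0∞) ^ n := add_le_add (hb false) (hb true)
        _ = 2 * (2⁻¹ : ℝ≥0∞) ^ n := by ring
    · rw [if_neg hn]
      have h1 : ∀ b : Bool, TL φ f c k (n, b) = ∅ := by
        intro b; rw [TL, if_neg hn]
      simp [h1, ENNReal.zero_rpow_of_pos (by norm_num : (0:ℝ) < 1)]
  calc Filter.liminf (fun k => ∑' i, Metric.ediam (TL φ f c k i) ^ (1:ℝ)) atTop
      ≤ Filter.liminf (fun k : ℕ => (2 : ℝ≥0∞) * (2⁻¹ : ℝ≥0∞) ^ k) atTop :=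
        Filter.liminf_le_liminf (Filter.Eventually.of_forall hsum)
    _ = 0 := by
        have h3 : Tendsto (fun k : ℕ => (2 : ℝ≥0∞) * (2⁻¹ : ℝ≥0∞) ^ k) atTop (𝓝 (2 * 0)) :=
          ENNReal.Tendsto.const_mul tendsto_half_pow (Or.inr (by norm_num))
        rw [mul_zero] at h3
        exact h3.liminf_eq

lemma hm_segment_zero {s : ℝ} (hs1 : 1 < s) (a b : Y) : μH[s] (segment ℝ a b) = 0 := by
  rcases MeasureTheory.Measure.hausdorffMeasure_zero_or_top hs1 (segment ℝ a b) with h | h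
  · exact h
  · exfalso
    rw [MeasureTheory.hausdorffMeasure_segment] at h
    exact (edist_ne_top a b) h

lemma hm_singleton_zero (x : Y) : μH[(1 : ℝ)] ({x} : Set Y) = 0 := by
  have h := hausdorffMeasure_segment (E := Y) x x
  rw [segment_same, edist_self] at h
  exact h

lemma hm_subsingleton_zero {s : Set Y} (hs : s.Subsingleton) : μH[(1 : ℝ)] s = 0 := by
  rcases hs.eq_empty_or_singleton with rfl | ⟨x, rfl⟩
  · simp
  · exact hm_singleton_zero x

lemma isTotallyDisconnected_of_hm1_zero {s : Set Y} (hs : μH[(1 : ℝ)] s = 0) :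
    IsTotallyDisconnected s := by
  intro t hts htc x hx y hy
  by_contra hxy
  have himg : IsPreconnected (dist x '' t) :=
    htc.image _ (Continuous.continuousOn (by fun_prop))
  have h0 : (0 : ℝ) ∈ dist x '' t := ⟨x, hx, dist_self x⟩
  have hr : dist x y ∈ dist x '' t := ⟨y, hy, rfl⟩
  have hIcc : Icc (0 : ℝ) (dist x y) ⊆ dist x '' t := himg.Icc_subset h0 hr
  have himgz : μH[(1 : ℝ)] (dist x '' t) = 0 := by
    have hle := (LipschitzWith.dist_right x).hausdorffMeasure_image_le
      (le_of_lt one_pos) t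
    simp only [ENNReal.coe_one, ENNReal.one_rpow, one_mul] at hle
    have hzt : μH[(1:ℝ)] t = 0 := le_antisymm ((measure_mono hts).trans_eq hs) zero_le
    exact le_antisymm (hle.trans_eq hzt) zero_le
  have hofr : ENNReal.ofReal (dist x y) = 0 := by
    have hchain : ENNReal.ofReal (dist x y) ≤ 0 := by
      calc ENNReal.ofReal (dist x y) = volume (Icc (0 : ℝ) (dist x y)) := by
            rw [Real.volume_Icc, sub_zero]
        _ = μH[(1 : ℝ)] (Icc (0 : ℝ) (dist x y)) := by
            rw [MeasureTheory.hausdorffMeasure_real]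
        _ ≤ μH[(1 : ℝ)] (dist x '' t) := measure_mono hIcc
        _ = 0 := himgz
    exact le_antisymm hchain zero_le
  rw [ENNReal.ofReal_eq_zero] at hofr
  exact hxy (dist_le_zero.1 (by rwa [dist_comm] at hofr) |>.symm)

end Measure

/-! ### Existence of a dense sequence of admissible wedges -/

lemma exists_seq [TopologicalSpace.SeparableSpace Y] (φ : Y →L[ℝ] ℝ) (hφ : φ ≠ 0) :
    ∃ f : ℕ → Y × Y × Y, (∀ n, 0 < del φ (f n)) ∧
      ∀ (t : Y × Y × Y) (ε : ℝ), 0 < ε → ∃ n, dist (f n) t < ε := by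
  obtain ⟨v, hv⟩ : ∃ v : Y, φ v ≠ 0 := by
    by_contra h
    push_neg at h
    exact hφ (ContinuousLinearMap.ext fun x => by simp [h x])
  set u : Y := (φ v)⁻¹ • v with hu
  have hφu : φ u = 1 := by
    rw [hu, _root_.map_smul, smul_eq_mul, inv_mul_cancel₀ hv]
  have key : ∀ (t : Y × Y × Y) (ε : ℝ), 0 < ε →
      ∃ t' : Y × Y × Y, 0 < del φ t' ∧ dist t' t < ε := by
    intro t ε hε
    have hupos : (0 : ℝ) < 1 + ‖u‖ := by positivity
    set δ : ℝ := ε / (2 * (1 + ‖u‖)) with hδ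
    have hδ0 : 0 < δ := by positivity
    set a : ℝ := if φ t.2.1 + δ = φ t.1 then δ / 2 else δ with ha
    have ha0 : 0 < a ∧ a ≤ δ := by
      rw [ha]; split <;> constructor <;> linarith
    have ha1 : φ t.2.1 + a ≠ φ t.1 := by
      rw [ha]; split
      case isTrue h => intro hcon; rw [← h] at hcon; linarith [add_left_cancel hcon]
      case isFalse h => exact h
    set b : ℝ := if φ t.2.2 + δ = φ t.2.1 + a then δ / 2 else δ with hb
    have hb0 : 0 < b ∧ b ≤ δ := by
      rw [hb]; split <;> constructor <;> linarith
    have hb1 : φ t.2.2 + b ≠ φ t.2.1 + a := by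
      rw [hb]; split
      case isTrue h => intro hcon; rw [← h] at hcon; linarith [add_left_cancel hcon]
      case isFalse h => exact h
    refine ⟨(t.1, t.2.1 + a • u, t.2.2 + b • u), ?_, ?_⟩
    · have e1 : φ (t.2.1 + a • u) = φ t.2.1 + a := by
        rw [map_add, _root_.map_smul, smul_eq_mul, hφu, mul_one]
      have e2 : φ (t.2.2 + b • u) = φ t.2.2 + b := by
        rw [map_add, _root_.map_smul, smul_eq_mul, hφu, mul_one]
      rw [del]
      dsimp only
      rw [e1, e2]
      apply lt_min
      · rw [abs_pos, sub_ne_zero]; exact ha1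
      · rw [abs_pos, sub_ne_zero]
        intro hcon
        exact hb1 (by linarith)
    · have hdist : dist ((t.1, t.2.1 + a • u, t.2.2 + b • u) : Y × Y × Y) t
          = max (dist t.1 t.1)
              (max (dist (t.2.1 + a • u) t.2.1) (dist (t.2.2 + b • u) t.2.2)) := by
        rw [Prod.dist_eq, Prod.dist_eq]
      rw [hdist, dist_self]
      have hnorm : ∀ r : ℝ, 0 < r → r ≤ δ → ∀ z : Y, dist (z + r • u) z < ε := by
        intro r hr0 hrδ z
        rw [dist_eq_norm, add_sub_cancel_left, norm_smul, Real.norm_eq_abs, abs_of_pos hr0]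
        calc r * ‖u‖ ≤ δ * (1 + ‖u‖) := by nlinarith [norm_nonneg u]
          _ = ε / 2 := by rw [hδ]; field_simp
          _ < ε := by linarith
      exact max_lt hε (max_lt (hnorm a ha0.1 ha0.2 _) (hnorm b hb0.1 hb0.2 _))
  obtain ⟨D, hD⟩ := TopologicalSpace.exists_dense_seq (Y × Y × Y)
  choose F hF1 hF2 using fun p : ℕ × ℕ => key (D p.1) (1 / ((p.2 : ℝ) + 1)) (by positivity)
  refine ⟨fun i => F (Nat.unpair i), fun i => hF1 _, ?_⟩
  intro t ε hε
  obtain ⟨n, hn⟩ := hD.exists_dist_lt t (by linarith : (0 : ℝ) < ε / 2)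
  obtain ⟨k, hk⟩ := exists_nat_one_div_lt (show (0 : ℝ) < ε / 2 by linarith)
  refine ⟨Nat.pair n k, ?_⟩
  show dist (F (Nat.unpair (Nat.pair n k))) t < ε
  rw [Nat.unpair_pair]
  calc dist (F (n, k)) t ≤ dist (F (n, k)) (D n) + dist (D n) t := dist_triangle _ _ _
    _ < 1 / ((k : ℝ) + 1) + ε / 2 := by
        have h2 := hF2 (n, k)
        have h3 : dist (D n) t < ε / 2 := by rw [dist_comm]; exact hn
        exact add_lt_add h2 h3
    _ < ε := by
        have : 1 / ((k : ℝ) + 1) < ε / 2 := hk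
        linarith

end Statement11Aux

/-- In a non-zero separable Banach space there is a `G_δ` set `𝔾` of
Hausdorff dimension `1` containing a dense set of wedges, whose intersection with each
translate of `ker φ` is totally disconnected. -/
theorem statement11 {Y : Type*} [NormedAddCommGroup Y] [NormedSpace ℝ Y] [CompleteSpace Y]
    [Nontrivial Y] [TopologicalSpace.SeparableSpace Y]
    (φ : Y →L[ℝ] ℝ) (hφ : φ ≠ 0) :
    ∃ 𝔾 : Set Y, IsGδ 𝔾 ∧ dimH 𝔾 = 1 ∧
      (∀ t : Y × Y × Y, ∀ ε > (0:ℝ),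
        ∃ t' : Y × Y × Y, wedge t' ⊆ 𝔾 ∧ wedgeDist t' t < ε) ∧
      ∀ y : Y, IsTotallyDisconnected (𝔾 ∩ {z : Y | φ z = φ y}) := by
  classical
  borelize Y
  obtain ⟨f, hd, hfD⟩ := Statement11Aux.exists_seq φ hφ
  open Statement11Aux in
  refine ⟨Statement11Aux.GSet φ f, Statement11Aux.isGδ_GSet φ f, ?_, ?_, ?_⟩
  · -- Hausdorff dimension 1
    apply le_antisymm
    · apply dimH_le
      intro d' hd'
      have hcoe : d' ≤ (1 : NNReal) := by
        by_contra hgt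
        push_neg at hgt
        have h1R : (1 : ℝ) < (d' : ℝ) := by exact_mod_cast hgt
        obtain ⟨q, hq⟩ := exists_nat_one_div_lt (by linarith : (0 : ℝ) < (d' : ℝ) - 1)
        set s : ℝ := 1 + ((q + 1 : ℕ) : ℝ)⁻¹ with hs
        have hs1 : (1 : ℝ) < s := by
          rw [hs]
          have : (0 : ℝ) < ((q + 1 : ℕ) : ℝ)⁻¹ := by positivity
          linarith
        have hslt : s < (d' : ℝ) := by
          rw [hs]
          have he : ((q + 1 : ℕ) : ℝ)⁻¹ = 1 / ((q : ℝ) + 1) := by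
            push_cast; rw [one_div]
          rw [he]
          linarith
        have hwedge : μH[s] (⋃ n, wedge (f n)) = 0 := by
          refine measure_iUnion_null fun n => ?_
          rw [wedge]
          exact measure_union_null (Statement11Aux.hm_segment_zero hs1 _ _)
            (Statement11Aux.hm_segment_zero hs1 _ _)
        have hEz : μH[s] (Statement11Aux.GSet φ f \ ⋃ n, wedge (f n)) = 0 := by
          rw [hs]
          exact Statement11Aux.hm_tail_zero φ f hd (by omega)
            (fun k => Statement11Aux.GSet_subset_tail k)
        have hzero : μH[s] (Statement11Aux.GSet φ f) = 0 := by
          have hsub : Statement11Aux.GSet φ f ⊆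
              (⋃ n, wedge (f n)) ∪ (Statement11Aux.GSet φ f \ ⋃ n, wedge (f n)) := by
            intro x hx
            by_cases h : x ∈ ⋃ n, wedge (f n)
            · exact Or.inl h
            · exact Or.inr ⟨hx, h⟩
          refine le_antisymm ?_ zero_le
          calc μH[s] (Statement11Aux.GSet φ f)
              ≤ μH[s] ((⋃ n, wedge (f n)) ∪ (Statement11Aux.GSet φ f \ ⋃ n, wedge (f n))) :=
                measure_mono hsub
            _ ≤ μH[s] (⋃ n, wedge (f n))
                + μH[s] (Statement11Aux.GSet φ f \ ⋃ n, wedge (f n)) := measure_union_le _ _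
            _ = 0 := by rw [hwedge, hEz, add_zero]
        rcases MeasureTheory.Measure.hausdorffMeasure_zero_or_top hslt
          (Statement11Aux.GSet φ f) with h | h
        · rw [hd'] at h; exact (by norm_num : (⊤ : ℝ≥0∞) ≠ 0) h
        · rw [hzero] at h; exact (by norm_num : (0 : ℝ≥0∞) ≠ ⊤) h
      exact_mod_cast hcoe
    · have h0 : (f 0).1 ≠ (f 0).2.1 := by
        intro hcon
        have h1 := lt_of_lt_of_le (hd 0) (min_le_left _ _)
        rw [hcon, sub_self, abs_zero] at h1
        exact lt_irrefl _ h1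
      have hseg : segment ℝ (f 0).1 (f 0).2.1 ⊆ Statement11Aux.GSet φ f := fun x hx =>
        Statement11Aux.wedge_subset_GSet hd 0 (Set.mem_union_left _ hx)
      have hne : μH[((1 : NNReal) : ℝ)] (Statement11Aux.GSet φ f) ≠ 0 := by
        intro hcon
        have hz : μH[(1 : ℝ)] (segment ℝ (f 0).1 (f 0).2.1) = 0 := by
          refine le_antisymm ?_ zero_le
          calc μH[(1 : ℝ)] (segment ℝ (f 0).1 (f 0).2.1)
              ≤ μH[(1 : ℝ)] (Statement11Aux.GSet φ f) := measure_mono hseg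
            _ = 0 := by
                have : ((1 : NNReal) : ℝ) = (1 : ℝ) := by norm_num
                rw [← this]; exact hcon
        rw [MeasureTheory.hausdorffMeasure_segment] at hz
        exact h0 (edist_eq_zero.1 hz)
      have := le_dimH_of_hausdorffMeasure_ne_zero hne
      simpa using this
  · intro t ε hε
    obtain ⟨n, hn⟩ := hfD t ε hε
    refine ⟨f n, Statement11Aux.wedge_subset_GSet hd n, ?_⟩
    have heq : wedgeDist (f n) t = dist (f n) t := by
      rw [wedgeDist, Prod.dist_eq, Prod.dist_eq, dist_eq_norm, dist_eq_norm, dist_eq_norm]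
    rw [heq]
    exact hn
  · intro y
    apply Statement11Aux.isTotallyDisconnected_of_hm1_zero
    have hsub : Statement11Aux.GSet φ f ∩ {z : Y | φ z = φ y} ⊆
        (⋃ n, wedge (f n) ∩ {z : Y | φ z = φ y}) ∪
          ((Statement11Aux.GSet φ f \ ⋃ n, wedge (f n)) ∩ {z : Y | φ z = φ y}) := by
      rintro x ⟨hx, hxc⟩
      by_cases h : x ∈ ⋃ n, wedge (f n)
      · obtain ⟨n, hn⟩ := Set.mem_iUnion.1 h
        exact Or.inl (Set.mem_iUnion.2 ⟨n, hn, hxc⟩)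
      · exact Or.inr ⟨⟨hx, h⟩, hxc⟩
    refine le_antisymm ?_ zero_le
    calc μH[(1 : ℝ)] (Statement11Aux.GSet φ f ∩ {z : Y | φ z = φ y})
        ≤ μH[(1 : ℝ)] ((⋃ n, wedge (f n) ∩ {z : Y | φ z = φ y}) ∪
            ((Statement11Aux.GSet φ f \ ⋃ n, wedge (f n)) ∩ {z : Y | φ z = φ y})) :=
          measure_mono hsub
      _ ≤ μH[(1 : ℝ)] (⋃ n, wedge (f n) ∩ {z : Y | φ z = φ y})
          + μH[(1 : ℝ)] ((Statement11Aux.GSet φ f \ ⋃ n, wedge (f n))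
              ∩ {z : Y | φ z = φ y}) := measure_union_le _ _
      _ = 0 := by
          rw [Statement11Aux.hm_level_zero φ f hd
            (fun k => Statement11Aux.GSet_subset_tail k) (φ y), add_zero]
          refine measure_iUnion_null fun n => ?_
          have hsplit2 : wedge (f n) ∩ {z : Y | φ z = φ y} ⊆
              (segment ℝ (f n).1 (f n).2.1 ∩ {z : Y | φ z = φ y}) ∪
                (segment ℝ (f n).2.1 (f n).2.2 ∩ {z : Y | φ z = φ y}) := by
            rintro x ⟨hx | hx, hxc⟩
            exacts [Or.inl ⟨hx, hxc⟩, Or.inr ⟨hx, hxc⟩]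
          refine measure_mono_null hsplit2 (measure_union_null ?_ ?_)
          · exact Statement11Aux.hm_subsingleton_zero
              (Statement11Aux.segment_inter_level_subsingleton
                (Statement11Aux.pr_ne (hd n) false) (φ y))
          · exact Statement11Aux.hm_subsingleton_zero
              (Statement11Aux.segment_inter_level_subsingleton
                (Statement11Aux.pr_ne (hd n) true) (φ y))
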